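/- The Dubrovin bracket on ℝ³ defined by {x,y} = xy − 2z, {y,z} = yz − 2x, {z,x} = zx − 2y satisfies the Jacobi identity, i.e., the bivector π = (xy−2z)∂x∧∂y + (yz−2x)∂y∧∂z + (zx−2y)∂z∧∂x is a Poisson tensor. -/

import Mathlib

/-- Partial derivative in the `i`-th coordinate direction on `ℝ³`. -/
noncomputable def pd (i : Fin 3) (f : (Fin 3 → ℝ) → ℝ) (p : Fin 3 → ℝ) : ℝ :=
  fderiv ℝ f p (Pi.single i 1)

/-- The Dubrovin bracket on functions on `ℝ³`, given by the bivector
`π = (xy−2z)∂x∧∂y + (yz−2x)∂y∧∂z + (zx−2y)∂z∧∂x`. -/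
noncomputable def dubrovinBracket (f g : (Fin 3 → ℝ) → ℝ) (p : Fin 3 → ℝ) : ℝ :=
  (p 0 * p 1 - 2 * p 2) * (pd 0 f p * pd 1 g p - pd 1 f p * pd 0 g p)
  + (p 1 * p 2 - 2 * p 0) * (pd 1 f p * pd 2 g p - pd 2 f p * pd 1 g p)
  + (p 2 * p 0 - 2 * p 1) * (pd 2 f p * pd 0 g p - pd 0 f p * pd 2 g p)

lemma hasFDerivAt_coord (j : Fin 3) (p : Fin 3 → ℝ) :
    HasFDerivAt (fun q : Fin 3 → ℝ => q j)
      (ContinuousLinearMap.proj j : (Fin 3 → ℝ) →L[ℝ] ℝ) p :=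
  (ContinuousLinearMap.proj j : (Fin 3 → ℝ) →L[ℝ] ℝ).hasFDerivAt

lemma pd_coord (i j : Fin 3) (p : Fin 3 → ℝ) :
    pd i (fun q => q j) p = if j = i then 1 else 0 := by
  unfold pd
  rw [(hasFDerivAt_coord j p).fderiv]
  simp [Pi.single_apply]

lemma pd_poly (a b c : Fin 3) (p : Fin 3 → ℝ) (i : Fin 3) :
    pd i (fun q => q a * q b - 2 * q c) p =
      (if a = i then 1 else 0) * p b + p a * (if b = i then 1 else 0)
        - 2 * (if c = i then 1 else 0) := by
  unfold pd
  have h : HasFDerivAt (fun q : Fin 3 → ℝ => q a * q b - 2 * q c)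
      ((p a • (ContinuousLinearMap.proj b : (Fin 3 → ℝ) →L[ℝ] ℝ)
        + p b • (ContinuousLinearMap.proj a : (Fin 3 → ℝ) →L[ℝ] ℝ))
        - (2 : ℝ) • (ContinuousLinearMap.proj c : (Fin 3 → ℝ) →L[ℝ] ℝ)) p := by
    have := ((hasFDerivAt_coord a p).mul (hasFDerivAt_coord b p)).sub
      ((hasFDerivAt_coord c p).const_mul (2 : ℝ))
    exact this
  rw [h.fderiv]
  simp [Pi.single_apply]
  ring

/-- The Dubrovin bracket satisfies the Jacobi identity on the coordinate
functions `x, y, z`, hence the bivector is a Poisson tensor. -/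
theorem dubrovin_jacobi :
    ∀ p : Fin 3 → ℝ,
      dubrovinBracket (fun q => q 0)
          (dubrovinBracket (fun q => q 1) (fun q => q 2)) p
      + dubrovinBracket (fun q => q 1)
          (dubrovinBracket (fun q => q 2) (fun q => q 0)) p
      + dubrovinBracket (fun q => q 2)
          (dubrovinBracket (fun q => q 0) (fun q => q 1)) p = 0 := by
  intro p
  have h1 : dubrovinBracket (fun q => q 1) (fun q => q 2)
      = fun q => q 1 * q 2 - 2 * q 0 := by
    funext q; simp [dubrovinBracket, pd_coord]
  have h2 : dubrovinBracket (fun q => q 2) (fun q => q 0)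
      = fun q => q 2 * q 0 - 2 * q 1 := by
    funext q; simp [dubrovinBracket, pd_coord]
  have h3 : dubrovinBracket (fun q => q 0) (fun q => q 1)
      = fun q => q 0 * q 1 - 2 * q 2 := by
    funext q; simp [dubrovinBracket, pd_coord]
  rw [h1, h2, h3]
  simp [dubrovinBracket, pd_coord, pd_poly]
  ring
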